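/- (Lommel's integral) For every real α > −1/2, every c > 0, and all x, y > 0 with x ≠ y, one has ∫_0^c J_α(tx) J_α(ty) t dt = c · ( y J_{α−1}(cy) J_α(cx) − x J_{α−1}(cx) J_α(cy) ) / (x² − y²), where the integral on the left converges absolutely. -/

import Mathlib

open MeasureTheory Real

/-- The Bessel function of the first kind `J_ν`, defined for `x > 0` by its power series
`J_ν(x) = Σ_{m=0}^∞ (−1)^m (x/2)^{2m+ν} / (m! Γ(m+ν+1))`, where `1/Γ` vanishes at
nonpositive integers (as does Mathlib's `Real.Gamma`). -/
noncomputable def besselJ (ν : ℝ) (x : ℝ) : ℝ :=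
  ∑' m : ℕ, (-1 : ℝ) ^ m * (x / 2) ^ (2 * (m : ℝ) + ν) /
    ((m.factorial : ℝ) * Real.Gamma ((m : ℝ) + ν + 1))

noncomputable def gcoef (ν : ℝ) (m : ℕ) : ℝ :=
  (-1)^m / ((4:ℝ)^m * m.factorial * Real.Gamma ((m:ℝ) + ν + 1))

noncomputable def gb (ν z : ℝ) : ℝ := ∑' m : ℕ, gcoef ν m * z^(2*m)

lemma gcoef_bound (ν : ℝ) : ∃ C : ℝ, 0 < C ∧ ∀ m : ℕ,
    |gcoef ν m| ≤ C / ((4:ℝ)^m * m.factorial) := by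
  set M : ℕ := ⌈1 - ν⌉₊ with hM
  refine ⟨1 + ∑ m ∈ Finset.range M, |gcoef ν m| * ((4:ℝ)^m * m.factorial), by positivity, ?_⟩
  intro m
  have hden : (0:ℝ) < (4:ℝ)^m * m.factorial := by positivity
  rcases lt_or_ge m M with hm | hm
  · rw [le_div_iff₀ hden]
    calc |gcoef ν m| * ((4:ℝ)^m * m.factorial)
        ≤ ∑ k ∈ Finset.range M, |gcoef ν k| * ((4:ℝ)^k * k.factorial) := by
          apply Finset.single_le_sum (f := fun k => |gcoef ν k| * ((4:ℝ)^k * k.factorial))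
            (fun k _ => by positivity) (Finset.mem_range.mpr hm)
      _ ≤ 1 + ∑ k ∈ Finset.range M, |gcoef ν k| * ((4:ℝ)^k * k.factorial) := by linarith
  · -- m ≥ M, so (m:ℝ) + ν + 1 ≥ 2 and Gamma ≥ 1
    have h2 : (2:ℝ) ≤ (m:ℝ) + ν + 1 := by
      have : (1 - ν : ℝ) ≤ M := Nat.le_ceil _
      have : (1 - ν : ℝ) ≤ m := this.trans (by exact_mod_cast hm)
      linarith
    have hG : (1:ℝ) ≤ Real.Gamma ((m:ℝ) + ν + 1) := by
      have := Real.Gamma_strictMonoOn_Ici.monotoneOn (Set.self_mem_Ici)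
        (Set.mem_Ici.mpr h2) h2
      rwa [Real.Gamma_two] at this
    have : |gcoef ν m| = 1 / ((4:ℝ)^m * m.factorial * Real.Gamma ((m:ℝ) + ν + 1)) := by
      rw [gcoef, abs_div, abs_pow, abs_neg, abs_one, one_pow]
      congr 1
      rw [abs_of_pos]
      positivity
    rw [this]
    have hS : (0:ℝ) ≤ ∑ k ∈ Finset.range M, |gcoef ν k| * ((4:ℝ)^k * k.factorial) :=
      Finset.sum_nonneg fun k _ => by positivity
    rw [div_le_div_iff₀ (by positivity) hden]
    nlinarith [hden, mul_le_mul_of_nonneg_left hG hden.le]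

lemma gb_summable_aux (ν r : ℝ) (hr : 0 ≤ r) :
    Summable (fun m : ℕ => (2 * (m:ℝ) + 2) * (|gcoef ν m| * r ^ (2*m))) := by
  obtain ⟨C, hC0, hC⟩ := gcoef_bound ν
  have hs : Summable (fun m : ℕ => (2*C) * ((r^2/2)^m / m.factorial)) :=
    (Real.summable_pow_div_factorial (r^2/2)).mul_left (2*C)
  refine Summable.of_nonneg_of_le (fun m => by positivity) (fun m => ?_) hs
  have h1 : (2 * (m:ℝ) + 2) ≤ 2 * 2^m := by
    have := Nat.lt_two_pow_self (n := m)
    have : (m:ℝ) + 1 ≤ 2^m := by exact_mod_cast this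
    linarith
  have h2 : r ^ (2*m) = (r^2)^m := by rw [pow_mul]
  have h3 : |gcoef ν m| * r^(2*m) ≤ C / ((4:ℝ)^m * m.factorial) * (r^2)^m := by
    rw [h2]
    exact mul_le_mul_of_nonneg_right (hC m) (by positivity)
  calc (2 * (m:ℝ) + 2) * (|gcoef ν m| * r ^ (2*m))
      ≤ (2 * 2^m) * (C / ((4:ℝ)^m * m.factorial) * (r^2)^m) := by
        apply mul_le_mul h1 h3 (by positivity) (by positivity)
    _ = (2*C) * ((r^2/2)^m / m.factorial) := by
        have h4 : (4:ℝ)^m = 2^m * 2^m := by rw [← mul_pow]; norm_num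
        rw [div_pow, h4]
        field_simp

lemma gb_summable_abs (ν z : ℝ) : Summable (fun m : ℕ => |gcoef ν m * z^(2*m)|) := by
  refine Summable.of_nonneg_of_le (fun m => abs_nonneg _) (fun m => ?_)
    (gb_summable_aux ν |z| (abs_nonneg z))
  rw [abs_mul, abs_pow]
  nlinarith [abs_nonneg (gcoef ν m), pow_nonneg (abs_nonneg z) (2*m),
    mul_nonneg (abs_nonneg (gcoef ν m)) (pow_nonneg (abs_nonneg z) (2*m)), Nat.cast_nonneg (α := ℝ) m]

lemma gb_summable (ν z : ℝ) : Summable (fun m : ℕ => gcoef ν m * z^(2*m)) :=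
  (gb_summable_abs ν z).of_abs

lemma gcoef_succ (ν : ℝ) (m : ℕ) : gcoef ν (m+1) * (2*(m:ℝ)+2) = -(1/2) * gcoef (ν+1) m := by
  have harg : ((m+1:ℕ):ℝ) + ν + 1 = (m:ℝ) + (ν+1) + 1 := by push_cast; ring
  rw [gcoef, gcoef, harg]
  set G := Real.Gamma ((m:ℝ) + (ν+1) + 1) with hG
  rcases eq_or_ne G 0 with h | h
  · rw [h]; simp
  · have hfac : ((m+1).factorial : ℝ) = ((m:ℝ)+1) * m.factorial := by
      rw [Nat.factorial_succ]; push_cast; ring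
    have hmf : (m.factorial : ℝ) ≠ 0 := Nat.cast_ne_zero.mpr m.factorial_ne_zero
    rw [hfac, pow_succ]
    field_simp
    ring

lemma gb_hasDerivAt (ν z : ℝ) : HasDerivAt (gb ν) (-(z/2) * gb (ν+1) z) z := by
  set R : ℝ := |z| + 1 with hR
  have hR1 : (1:ℝ) ≤ R := by rw [hR]; linarith [abs_nonneg z]
  have hR0 : (0:ℝ) ≤ R := le_trans zero_le_one hR1
  have hzR : z ∈ Metric.ball (0:ℝ) R := by
    rw [Metric.mem_ball, Real.dist_eq, sub_zero, hR]
    linarith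
  have key : HasDerivAt (fun w => ∑' m : ℕ, gcoef ν m * w^(2*m))
      (∑' m : ℕ, gcoef ν m * ((2*m : ℕ) * z^(2*m-1))) z := by
    refine hasDerivAt_tsum_of_isPreconnected
      (u := fun m : ℕ => (2*(m:ℝ)+2) * (|gcoef ν m| * R^(2*m)))
      (gb_summable_aux ν R hR0) Metric.isOpen_ball
      (convex_ball (0:ℝ) R).isPreconnected
      (fun m w _ => ((hasDerivAt_pow (2*m) w).const_mul (gcoef ν m)))
      (fun m w hw => ?_) hzR (gb_summable ν z) hzR
    have hw' : |w| ≤ R := by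
      rw [Metric.mem_ball, Real.dist_eq, sub_zero] at hw
      exact hw.le
    have h1 : ‖gcoef ν m * ((2*m : ℕ) * w^(2*m-1))‖
        = |gcoef ν m| * ((2*(m:ℝ)) * |w|^(2*m-1)) := by
      rw [norm_eq_abs, abs_mul, abs_mul, abs_pow]
      push_cast
      simp [abs_of_nonneg, mul_nonneg]
    rw [h1]
    have h2 : |w|^(2*m-1) ≤ R^(2*m) := by
      calc |w|^(2*m-1) ≤ R^(2*m-1) := pow_le_pow_left₀ (abs_nonneg w) hw' _
        _ ≤ R^(2*m) := pow_le_pow_right₀ hR1 (Nat.sub_le _ _ |>.trans (le_refl _))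
    have h5 : |gcoef ν m| * |w|^(2*m-1) ≤ |gcoef ν m| * R^(2*m) :=
      mul_le_mul_of_nonneg_left h2 (abs_nonneg _)
    have h6 : (0:ℝ) ≤ |gcoef ν m| * R^(2*m) := by positivity
    calc |gcoef ν m| * ((2*(m:ℝ)) * |w|^(2*m-1))
        = (2*(m:ℝ)) * (|gcoef ν m| * |w|^(2*m-1)) := by ring
      _ ≤ (2*(m:ℝ)) * (|gcoef ν m| * R^(2*m)) := by
          exact mul_le_mul_of_nonneg_left h5 (by positivity)
      _ ≤ (2*(m:ℝ)+2) * (|gcoef ν m| * R^(2*m)) := by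
          exact mul_le_mul_of_nonneg_right (by linarith) h6
  have hsum' : Summable (fun m : ℕ => gcoef ν m * ((2*m : ℕ) * z^(2*m-1))) := by
    refine Summable.of_norm ?_
    refine Summable.of_nonneg_of_le (fun m => norm_nonneg _) (fun m => ?_)
      (gb_summable_aux ν R hR0)
    have h1 : ‖gcoef ν m * ((2*m : ℕ) * z^(2*m-1))‖
        = |gcoef ν m| * ((2*(m:ℝ)) * |z|^(2*m-1)) := by
      rw [norm_eq_abs, abs_mul, abs_mul, abs_pow]
      push_cast
      simp [abs_of_nonneg, mul_nonneg]
    rw [h1]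
    have h2 : |z|^(2*m-1) ≤ R^(2*m) := by
      calc |z|^(2*m-1) ≤ R^(2*m-1) := pow_le_pow_left₀ (abs_nonneg z) (by rw [hR]; linarith) _
        _ ≤ R^(2*m) := pow_le_pow_right₀ hR1 (Nat.sub_le _ _ |>.trans (le_refl _))
    have h5 : |gcoef ν m| * |z|^(2*m-1) ≤ |gcoef ν m| * R^(2*m) :=
      mul_le_mul_of_nonneg_left h2 (abs_nonneg _)
    have h6 : (0:ℝ) ≤ |gcoef ν m| * R^(2*m) := by positivity
    calc |gcoef ν m| * ((2*(m:ℝ)) * |z|^(2*m-1))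
        = (2*(m:ℝ)) * (|gcoef ν m| * |z|^(2*m-1)) := by ring
      _ ≤ (2*(m:ℝ)) * (|gcoef ν m| * R^(2*m)) := by
          exact mul_le_mul_of_nonneg_left h5 (by positivity)
      _ ≤ (2*(m:ℝ)+2) * (|gcoef ν m| * R^(2*m)) := by
          exact mul_le_mul_of_nonneg_right (by linarith) h6
  have hval : (∑' m : ℕ, gcoef ν m * ((2*m : ℕ) * z^(2*m-1))) = -(z/2) * gb (ν+1) z := by
    rw [Summable.tsum_eq_zero_add hsum']
    simp only [Nat.mul_zero, Nat.cast_zero, zero_mul, mul_zero, zero_add]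
    have : ∀ m : ℕ, gcoef ν (m+1) * ((2*(m+1) : ℕ) * z^(2*(m+1)-1))
        = -(z/2) * (gcoef (ν+1) m * z^(2*m)) := by
      intro m
      have h3 : (2*(m+1) : ℕ) - 1 = 2*m + 1 := by omega
      have h4 : ((2*(m+1) : ℕ) : ℝ) = 2*(m:ℝ)+2 := by push_cast; ring
      rw [h3, h4, pow_succ]
      linear_combination (z^(2*m) * z) * gcoef_succ ν m
    rw [tsum_congr this, tsum_mul_left, gb]
  rw [← hval]
  exact key

lemma gb_continuous (ν : ℝ) : Continuous (gb ν) :=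
  continuous_iff_continuousAt.mpr fun z => (gb_hasDerivAt ν z).continuousAt

lemma gamma_id {s : ℝ} (hs : -(1/2:ℝ) < s) : s / Real.Gamma (s+1) = 1 / Real.Gamma s := by
  rcases eq_or_ne s 0 with h | h
  · rw [h]
    simp [Real.Gamma_zero]
  · have hG : Real.Gamma s ≠ 0 := by
      apply Real.Gamma_ne_zero
      intro m
      rcases Nat.eq_zero_or_pos m with hm | hm
      · rw [hm]; simpa using h
      · have : (1:ℝ) ≤ (m:ℝ) := by exact_mod_cast hm
        intro hsm
        rw [hsm] at hs
        linarith
    rw [Real.Gamma_add_one h, div_mul_eq_div_div, div_self h]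

lemma gcoef_rec {ν : ℝ} (hν : -(1/2:ℝ) < ν) (k : ℕ) :
    gcoef (ν-1) (k+1) = ν * gcoef ν (k+1) - (1/4) * gcoef (ν+1) k := by
  have hs : (0:ℝ) < (k:ℝ) + ν + 1 := by
    have : (0:ℝ) ≤ (k:ℝ) := Nat.cast_nonneg k
    linarith
  set s : ℝ := (k:ℝ) + ν + 1 with hsdef
  have hGs : Real.Gamma s ≠ 0 := (Real.Gamma_pos_of_pos hs).ne'
  have hGs1 : Real.Gamma (s+1) = s * Real.Gamma s := Real.Gamma_add_one hs.ne'
  have e1 : ((k+1:ℕ):ℝ) + (ν-1) + 1 = s := by push_cast [hsdef]; ring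
  have e2 : ((k+1:ℕ):ℝ) + ν + 1 = s + 1 := by push_cast [hsdef]; ring
  have e3 : ((k:ℕ):ℝ) + (ν+1) + 1 = s + 1 := by push_cast [hsdef]; ring
  rw [gcoef, gcoef, gcoef, e1, e2, e3, hGs1]
  have hfac : ((k+1).factorial : ℝ) = ((k:ℝ)+1) * k.factorial := by
    rw [Nat.factorial_succ]; push_cast; ring
  have hkf : (k.factorial : ℝ) ≠ 0 := Nat.cast_ne_zero.mpr k.factorial_ne_zero
  have hk1 : ((k:ℝ)+1) ≠ 0 := by positivity
  rw [hfac, pow_succ]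
  have h4 : ((4:ℝ)^k) ≠ 0 := by positivity
  field_simp
  ring_nf
  rw [hsdef]; ring

lemma gb_rec {ν : ℝ} (hν : -(1/2:ℝ) < ν) (z : ℝ) :
    gb (ν-1) z = ν * gb ν z - (z/2)^2 * gb (ν+1) z := by
  classical
  set q : ℕ → ℝ := fun m => (z/2)^2 * (gcoef (ν+1) m * z^(2*m)) with hq
  set Q : ℕ → ℝ := fun m => if m = 0 then 0 else (z/2)^2 * (gcoef (ν+1) (m-1) * z^(2*(m-1))) with hQ
  have hqs : Summable q := (gb_summable (ν+1) z).mul_left _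
  have hQshift : (fun n : ℕ => Q (n+1)) = q := by
    funext n; simp [hQ, hq]
  have hQs : Summable Q := (summable_nat_add_iff 1).mp (hQshift ▸ hqs)
  have hqQ : ∑' m, q m = ∑' m, Q m := by
    rw [Summable.tsum_eq_zero_add hQs, hQshift]
    simp [hQ]
  have h1 : ν * gb ν z = ∑' m : ℕ, ν * (gcoef ν m * z^(2*m)) := tsum_mul_left.symm
  have h2 : (z/2)^2 * gb (ν+1) z = ∑' m, Q m := by
    rw [gb, ← tsum_mul_left]
    exact hqQ
  rw [h1, h2, ← Summable.tsum_sub ((gb_summable ν z).mul_left ν) hQs, gb]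
  apply tsum_congr
  intro m
  match m with
  | 0 =>
    simp only [hQ, if_pos rfl, Nat.mul_zero, pow_zero, mul_one, sub_zero]
    rw [gcoef, gcoef]
    simp only [Nat.cast_zero, Nat.factorial_zero, Nat.cast_one, pow_zero]
    have e1 : (0:ℝ) + (ν-1) + 1 = ν := by ring
    have e2 : (0:ℝ) + ν + 1 = ν + 1 := by ring
    rw [e1, e2]
    have h := gamma_id hν
    rw [one_mul, one_mul, ← h]
    ring
  | k+1 =>
    have hQk : Q (k+1) = (1/4) * gcoef (ν+1) k * z^(2*(k+1)) := by
      simp only [hQ, Nat.add_sub_cancel, if_neg (Nat.succ_ne_zero k)]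
      rw [pow_succ, pow_mul]
      ring_nf
    rw [hQk, gcoef_rec hν k]
    ring

lemma besselJ_eq {ν x : ℝ} (hx : 0 < x) : besselJ ν x = (x/2)^ν * gb ν x := by
  have hx2 : (0:ℝ) < x/2 := by linarith
  rw [besselJ, gb, ← tsum_mul_left]
  apply tsum_congr
  intro m
  have h1 : (x/2) ^ (2*(m:ℝ) + ν) = (x/2)^ν * (x/2)^(2*m : ℕ) := by
    rw [← Real.rpow_natCast (x/2) (2*m), ← Real.rpow_add hx2]
    push_cast
    ring_nf
  rw [h1, gcoef]
  have h2 : ((x/2):ℝ)^(2*m : ℕ) = x^(2*m) / 4^m := by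
    rw [div_pow, pow_mul, pow_mul]
    norm_num
  rw [h2]
  have h4 : ((4:ℝ)^m) ≠ 0 := by positivity
  have hmf : (m.factorial : ℝ) ≠ 0 := Nat.cast_ne_zero.mpr m.factorial_ne_zero
  rcases eq_or_ne (Real.Gamma ((m:ℝ) + ν + 1)) 0 with hG | hG
  · rw [hG]
    simp
  · field_simp

open scoped Topology
open Filter

/-- Lommel's integral: for `α > −1/2`, `c > 0`, and `x, y > 0` with `x ≠ y`,
`∫_0^c J_α(tx) J_α(ty) t dt
  = c (y J_{α−1}(cy) J_α(cx) − x J_{α−1}(cx) J_α(cy)) / (x² − y²)`,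
and the integrand is absolutely integrable on `(0, c]`. -/
theorem lommel_integral (α c x y : ℝ) (hα : -(1 / 2 : ℝ) < α) (hc : 0 < c)
    (hx : 0 < x) (hy : 0 < y) (hxy : x ≠ y) :
    IntegrableOn (fun t : ℝ => besselJ α (t * x) * besselJ α (t * y) * t) (Set.Ioc 0 c) ∧
    ∫ t in Set.Ioc (0 : ℝ) c, besselJ α (t * x) * besselJ α (t * y) * t =
      c * (y * besselJ (α - 1) (c * y) * besselJ α (c * x)
          - x * besselJ (α - 1) (c * x) * besselJ α (c * y)) / (x ^ 2 - y ^ 2) := by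
  have hyx2 : y^2 - x^2 ≠ 0 := by
    intro h
    rcases mul_eq_zero.mp (by nlinarith : (y - x) * (y + x) = 0) with h1 | h1
    · exact hxy (by linarith)
    · nlinarith
  set F : ℝ → ℝ := fun t => t * ((t/2)^(2*α) * (x^α * y^α * (gb α (t*x) * gb α (t*y)))) with hF
  set W : ℝ → ℝ := fun t => 2 * (t/2)^(2*α) * (x^α * y^α) *
    (gb (α-1) (t*x) * gb α (t*y) - gb α (t*x) * gb (α-1) (t*y)) with hWdef
  -- Step A : the integrand equals F on positive reals
  have hFeq : ∀ t : ℝ, 0 < t → besselJ α (t*x) * besselJ α (t*y) * t = F t := by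
    intro t htp
    have ht2 : (0:ℝ) < t/2 := by linarith
    rw [besselJ_eq (mul_pos htp hx), besselJ_eq (mul_pos htp hy)]
    have h1 : ((t*x/2):ℝ)^α = (t/2)^α * x^α := by
      rw [show t*x/2 = (t/2)*x by ring, Real.mul_rpow ht2.le hx.le]
    have h2 : ((t*y/2):ℝ)^α = (t/2)^α * y^α := by
      rw [show t*y/2 = (t/2)*y by ring, Real.mul_rpow ht2.le hy.le]
    have h3 : ((t/2):ℝ)^(2*α) = (t/2)^α * (t/2)^α := by
      rw [← Real.rpow_add ht2]; ring_nf
    simp only [h1, h2, hF]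
    rw [h3]
    ring
  -- continuity of F on (0, ∞)
  have hgbc : ∀ ν : ℝ, Continuous fun t : ℝ => gb ν (t*x) := fun ν =>
    (gb_continuous ν).comp (continuous_id.mul continuous_const)
  have hgbcy : ∀ ν : ℝ, Continuous fun t : ℝ => gb ν (t*y) := fun ν =>
    (gb_continuous ν).comp (continuous_id.mul continuous_const)
  have hFcont : ContinuousOn F (Set.Ioi 0) := by
    intro t ht
    have ht' : (0:ℝ) < t := ht
    apply ContinuousAt.continuousWithinAt
    have hdiv2 : ContinuousAt (fun s : ℝ => s/2) t := continuousAt_id.div_const 2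
    have h1 : ContinuousAt (fun s : ℝ => (s/2)^(2*α)) t :=
      ContinuousAt.comp (x := t) (g := fun u : ℝ => u^(2*α)) (f := fun s : ℝ => s/2)
        (Real.continuousAt_rpow_const (t/2) (2*α) (Or.inl (by positivity))) hdiv2
    exact continuousAt_id.mul (h1.mul (((continuous_const.mul continuous_const).mul
      ((hgbc α).mul (hgbcy α))).continuousAt))
  -- Step C : integrability of F on Ioc 0 c
  have hφ : Continuous fun t : ℝ => x^α * y^α * (gb α (t*x) * gb α (t*y)) :=
    (continuous_const.mul continuous_const).mul ((hgbc α).mul (hgbcy α))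
  obtain ⟨M, hM⟩ := (isCompact_Icc (a := (0:ℝ)) (b := c)).exists_bound_of_continuousOn
    hφ.continuousOn
  have hM0 : 0 ≤ M := le_trans (norm_nonneg _) (hM 0 ⟨le_refl 0, hc.le⟩)
  have hg : IntegrableOn (fun t : ℝ => (M * (1/2:ℝ)^(2*α)) * t^(2*α+1)) (Set.Ioc 0 c) := by
    have h1 : IntervalIntegrable (fun t : ℝ => t^(2*α+1)) volume 0 c :=
      intervalIntegral.intervalIntegrable_rpow' (by linarith)
    have h2 := (intervalIntegrable_iff_integrableOn_Ioc_of_le hc.le).mp h1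
    exact h2.const_mul _
  have hFint : IntegrableOn F (Set.Ioc 0 c) := by
    apply Integrable.mono' hg ((hFcont.mono Set.Ioc_subset_Ioi_self).aestronglyMeasurable
      measurableSet_Ioc)
    filter_upwards [ae_restrict_mem measurableSet_Ioc] with t ht
    have htp : 0 < t := ht.1
    have ht2 : (0:ℝ) < t/2 := by linarith
    have hsplit : ((t/2):ℝ)^(2*α) = t^(2*α) * (1/2:ℝ)^(2*α) := by
      rw [show (t/2 : ℝ) = t * (1/2) by ring, Real.mul_rpow htp.le (by norm_num)]
    have hts : t * t^(2*α) = t^(2*α+1) := by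
      nth_rewrite 1 [← Real.rpow_one t]
      rw [← Real.rpow_add htp]; ring_nf
    have hb := hM t ⟨htp.le, ht.2⟩
    rw [Real.norm_eq_abs] at hb ⊢
    simp only [hF]
    rw [abs_mul, abs_mul, abs_of_pos htp, abs_of_pos (Real.rpow_pos_of_pos ht2 _)]
    calc t * ((t/2)^(2*α) * |x^α * y^α * (gb α (t*x) * gb α (t*y))|)
        ≤ t * ((t/2)^(2*α) * M) := by
          apply mul_le_mul_of_nonneg_left (mul_le_mul_of_nonneg_left hb
            (Real.rpow_pos_of_pos ht2 _).le) htp.le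
      _ = M * (1/2:ℝ)^(2*α) * t^(2*α+1) := by
          rw [hsplit, ← hts]; ring
  constructor
  · exact hFint.congr_fun (fun t ht => (hFeq t ht.1).symm) measurableSet_Ioc
  -- Step D : derivative of W
  have hW : ∀ t : ℝ, 0 < t → HasDerivAt W ((y^2-x^2) * F t) t := by
    intro t ht
    have ht2 : (0:ℝ) < t/2 := by linarith
    have hP : HasDerivAt (fun s : ℝ => (s/2)^(2*α)) ((2*α) * (t/2)^(2*α-1) * (1/2)) t :=
      by have := (Real.hasDerivAt_rpow_const (x := t/2) (p := 2*α) (Or.inl ht2.ne')).comp t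
          ((hasDerivAt_id t).div_const 2); exact this
    have hax : HasDerivAt (fun s : ℝ => gb α (s*x)) (-(t*x/2) * gb (α+1) (t*x) * x) t :=
      by have := (gb_hasDerivAt α (t*x)).comp t (hasDerivAt_mul_const x); exact this
    have hay : HasDerivAt (fun s : ℝ => gb α (s*y)) (-(t*y/2) * gb (α+1) (t*y) * y) t :=
      by have := (gb_hasDerivAt α (t*y)).comp t (hasDerivAt_mul_const y); exact this
    have hbx : HasDerivAt (fun s : ℝ => gb (α-1) (s*x)) (-(t*x/2) * gb α (t*x) * x) t := by
      have := (gb_hasDerivAt (α-1) (t*x)).comp t (hasDerivAt_mul_const x)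
      rwa [show α - 1 + 1 = α by ring] at this
    have hby : HasDerivAt (fun s : ℝ => gb (α-1) (s*y)) (-(t*y/2) * gb α (t*y) * y) t := by
      have := (gb_hasDerivAt (α-1) (t*y)).comp t (hasDerivAt_mul_const y)
      rwa [show α - 1 + 1 = α by ring] at this
    have hH : HasDerivAt (fun s : ℝ => gb (α-1) (s*x) * gb α (s*y) - gb α (s*x) * gb (α-1) (s*y))
        ((-(t*x/2) * gb α (t*x) * x) * gb α (t*y) + gb (α-1) (t*x) * (-(t*y/2) * gb (α+1) (t*y) * y)
         - ((-(t*x/2) * gb (α+1) (t*x) * x) * gb (α-1) (t*y)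
            + gb α (t*x) * (-(t*y/2) * gb α (t*y) * y))) t := (hbx.mul hay).sub (hax.mul hby)
    have hW0 := ((hP.const_mul 2).mul_const (x^α * y^α)).fun_mul hH
    convert (show HasDerivAt W _ t from hW0) using 1
    have e1 : ((t/2):ℝ)^(2*α-1) = (t/2)^(2*α) / (t/2) := by
      rw [Real.rpow_sub ht2, Real.rpow_one]
    have e2 : gb (α-1) (t*x) = α * gb α (t*x) - (t*x/2)^2 * gb (α+1) (t*x) := gb_rec hα (t*x)
    have e3 : gb (α-1) (t*y) = α * gb α (t*y) - (t*y/2)^2 * gb (α+1) (t*y) := gb_rec hα (t*y)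
    simp only [hF]
    rw [e1, e2, e3]
    field_simp
    ring
  -- Step E : FTC on [c/(n+1), c]
  have hstepE : ∀ n : ℕ, ∫ t in Set.Ioc (c/((n:ℝ)+1)) c, F t
      = (W c - W (c/((n:ℝ)+1))) / (y^2 - x^2) := by
    intro n
    set ε : ℝ := c/((n:ℝ)+1) with hε
    have hεp : 0 < ε := by positivity
    have hεc : ε ≤ c := by
      rw [hε, div_le_iff₀ (by positivity)]
      nlinarith [Nat.cast_nonneg (α := ℝ) n]
    have huIcc : Set.uIcc ε c = Set.Icc ε c := Set.uIcc_of_le hεc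
    have hder : ∀ t ∈ Set.uIcc ε c, HasDerivAt W ((y^2-x^2) * F t) t := by
      intro t htm
      rw [huIcc] at htm
      exact hW t (lt_of_lt_of_le hεp htm.1)
    have hci : IntervalIntegrable (fun t => (y^2-x^2) * F t) volume ε c := by
      apply ContinuousOn.intervalIntegrable
      apply continuousOn_const.mul (hFcont.mono ?_)
      rw [huIcc]
      intro t htm
      exact lt_of_lt_of_le hεp htm.1
    have hFTC := intervalIntegral.integral_eq_sub_of_hasDerivAt hder hci
    rw [intervalIntegral.integral_of_le hεc] at hFTC
    rw [MeasureTheory.integral_const_mul] at hFTC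
    rw [eq_div_iff hyx2]
    linarith [hFTC]
  -- Step F1 : the integrals over Ioc (c/(n+1)) c converge to the integral over Ioc 0 c
  have hUnion : (⋃ n : ℕ, Set.Ioc (c/((n:ℝ)+1)) c) = Set.Ioc 0 c := by
    ext t
    simp only [Set.mem_iUnion, Set.mem_Ioc]
    constructor
    · rintro ⟨n, h1, h2⟩
      exact ⟨lt_trans (by positivity) h1, h2⟩
    · rintro ⟨h1, h2⟩
      obtain ⟨n, hn⟩ := exists_nat_gt (c/t)
      refine ⟨n, ?_, h2⟩
      rw [div_lt_iff₀ (by positivity)]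
      have : c/t < (n:ℝ)+1 := lt_trans hn (by linarith)
      rw [div_lt_iff₀ h1] at this
      linarith
  have hL1 : Filter.Tendsto (fun n : ℕ => ∫ t in Set.Ioc (c/((n:ℝ)+1)) c, F t)
      Filter.atTop (𝓝 (∫ t in Set.Ioc (0:ℝ) c, F t)) := by
    have hmono : Monotone fun n : ℕ => Set.Ioc (c/((n:ℝ)+1)) c := by
      intro n m hnm
      apply Set.Ioc_subset_Ioc_left
      apply div_le_div_of_nonneg_left hc.le (by positivity)
      have : (n:ℝ) ≤ (m:ℝ) := Nat.cast_le.mpr hnm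
      linarith
    have := tendsto_setIntegral_of_monotone (fun n : ℕ => measurableSet_Ioc) hmono
      (hUnion ▸ hFint)
    rwa [hUnion] at this
  -- Step F2 : W (c/(n+1)) → 0
  have hWlim : Filter.Tendsto W (nhdsWithin 0 (Set.Ioi 0)) (𝓝 0) := by
    set H : ℝ → ℝ := fun s => gb (α-1) (s*x) * gb α (s*y) - gb α (s*x) * gb (α-1) (s*y) with hHdef
    have hH0 : H 0 = 0 := by simp only [hHdef]; ring
    have hHd : HasDerivAt H ((-(0*x/2) * gb α (0*x) * x) * gb α (0*y)
        + gb (α-1) (0*x) * (-(0*y/2) * gb (α+1) (0*y) * y)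
        - ((-(0*x/2) * gb (α+1) (0*x) * x) * gb (α-1) (0*y)
           + gb α (0*x) * (-(0*y/2) * gb α (0*y) * y))) 0 := by
      have hax := (gb_hasDerivAt α (0*x)).comp 0 (hasDerivAt_mul_const x)
      have hay := (gb_hasDerivAt α (0*y)).comp 0 (hasDerivAt_mul_const y)
      have hbx := (gb_hasDerivAt (α-1) (0*x)).comp 0 (hasDerivAt_mul_const x)
      have hby := (gb_hasDerivAt (α-1) (0*y)).comp 0 (hasDerivAt_mul_const y)
      rw [show α - 1 + 1 = α by ring] at hbx hby
      exact (hbx.mul hay).sub (hax.mul hby)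
    set d : ℝ := (-(0*x/2) * gb α (0*x) * x) * gb α (0*y)
        + gb (α-1) (0*x) * (-(0*y/2) * gb (α+1) (0*y) * y)
        - ((-(0*x/2) * gb (α+1) (0*x) * x) * gb (α-1) (0*y)
           + gb α (0*x) * (-(0*y/2) * gb α (0*y) * y)) with hd
    have hslope : Filter.Tendsto (fun t : ℝ => H t / t) (nhdsWithin 0 (Set.Ioi 0)) (𝓝 d) := by
      have h1 := hasDerivAt_iff_tendsto_slope.mp hHd
      have h2 : Filter.Tendsto (slope H 0) (nhdsWithin 0 (Set.Ioi 0)) (𝓝 d) :=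
        h1.mono_left (nhdsWithin_mono 0 (fun t ht => ne_of_gt ht))
      refine h2.congr fun t => ?_
      simp [slope_def_field, hH0]
    have hpow : Filter.Tendsto (fun t : ℝ => (t/2)^(2*α+1)) (nhdsWithin 0 (Set.Ioi 0)) (𝓝 0) := by
      have h1 : ContinuousAt (fun u : ℝ => u^(2*α+1)) 0 :=
        Real.continuousAt_rpow_const 0 (2*α+1) (Or.inr (by linarith))
      have h2 : Filter.Tendsto (fun t : ℝ => t/2) (nhdsWithin 0 (Set.Ioi 0)) (𝓝 0) := by
        apply Filter.Tendsto.mono_left _ nhdsWithin_le_nhds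
        have := (continuous_id.div_const (2:ℝ)).tendsto (0:ℝ)
        simpa using this
      have h3 := (h1.tendsto.comp h2)
      rw [Real.zero_rpow (by linarith : 2*α+1 ≠ 0)] at h3
      exact h3
    have hWe : ∀ t ∈ Set.Ioi (0:ℝ), W t = (4 * (x^α * y^α)) * ((t/2)^(2*α+1) * (H t / t)) := by
      intro t ht
      have htp : (0:ℝ) < t := ht
      have ht2 : (0:ℝ) < t/2 := by linarith
      have e1 : ((t/2):ℝ)^(2*α+1) = (t/2)^(2*α) * (t/2) := by
        rw [Real.rpow_add ht2, Real.rpow_one]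
      simp only [hWdef, hHdef]
      rw [e1]
      field_simp
      ring
    have : Filter.Tendsto (fun t => (4 * (x^α * y^α)) * ((t/2)^(2*α+1) * (H t / t)))
        (nhdsWithin 0 (Set.Ioi 0)) (𝓝 ((4 * (x^α * y^α)) * (0 * d))) :=
      Filter.Tendsto.const_mul _ (hpow.mul hslope)
    rw [zero_mul, mul_zero] at this
    apply this.congr'
    filter_upwards [self_mem_nhdsWithin] with t ht
    exact (hWe t ht).symm
  have hεlim : Filter.Tendsto (fun n : ℕ => c/((n:ℝ)+1)) Filter.atTop
      (nhdsWithin 0 (Set.Ioi 0)) := by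
    rw [tendsto_nhdsWithin_iff]
    constructor
    · apply Filter.Tendsto.div_atTop tendsto_const_nhds
      exact Filter.tendsto_atTop_add_const_right _ 1 tendsto_natCast_atTop_atTop
    · filter_upwards with n
      exact Set.mem_Ioi.mpr (by positivity)
  have hL2 : Filter.Tendsto (fun n : ℕ => (W c - W (c/((n:ℝ)+1))) / (y^2 - x^2))
      Filter.atTop (𝓝 ((W c - 0) / (y^2 - x^2))) :=
    ((tendsto_const_nhds.sub (hWlim.comp hεlim)).div_const _)
  have hkey : ∫ t in Set.Ioc (0:ℝ) c, F t = W c / (y^2 - x^2) := by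
    have huniq := tendsto_nhds_unique (hL1.congr hstepE) hL2
    rw [sub_zero] at huniq
    exact huniq
  -- Step G : final algebra
  have hInt : ∫ t in Set.Ioc (0:ℝ) c, besselJ α (t*x) * besselJ α (t*y) * t
      = ∫ t in Set.Ioc (0:ℝ) c, F t :=
    setIntegral_congr_fun measurableSet_Ioc (fun t ht => hFeq t ht.1)
  rw [hInt, hkey]
  have hc2 : (0:ℝ) < c/2 := by linarith
  have hxy2 : x^2 - y^2 ≠ 0 := by intro h; exact hyx2 (by linarith)
  simp only [besselJ_eq (mul_pos hc hx), besselJ_eq (mul_pos hc hy)]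
  have f1 : ((c*x/2):ℝ)^α = (c/2)^α * x^α := by
    rw [show c*x/2 = (c/2)*x by ring, Real.mul_rpow hc2.le hx.le]
  have f2 : ((c*y/2):ℝ)^α = (c/2)^α * y^α := by
    rw [show c*y/2 = (c/2)*y by ring, Real.mul_rpow hc2.le hy.le]
  have f3 : ((c*x/2):ℝ)^(α-1) = (c/2)^(α-1) * x^(α-1) := by
    rw [show c*x/2 = (c/2)*x by ring, Real.mul_rpow hc2.le hx.le]
  have f4 : ((c*y/2):ℝ)^(α-1) = (c/2)^(α-1) * y^(α-1) := by
    rw [show c*y/2 = (c/2)*y by ring, Real.mul_rpow hc2.le hy.le]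
  have g1 : ((c/2):ℝ)^(α-1) = (c/2)^α/(c/2) := by
    rw [Real.rpow_sub hc2, Real.rpow_one]
  have g2 : x^(α-1) = x^α/x := by rw [Real.rpow_sub hx, Real.rpow_one]
  have g3 : y^(α-1) = y^α/y := by rw [Real.rpow_sub hy, Real.rpow_one]
  have g4 : ((c/2):ℝ)^(2*α) = (c/2)^α * (c/2)^α := by
    rw [← Real.rpow_add hc2]; ring_nf
  simp only [hWdef]
  rw [f1, f2, f3, f4, g1, g2, g3, g4]
  rw [div_eq_div_iff hyx2 hxy2]
  field_simp
  ring
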